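/- If the interval function g decreases on subdivision and is continuous (oscillation zero at every point), then either the upper norm-limit of g over R is −∞, or the norm-limit of g over R exists (the upper and lower norm-limits over R are equal). -/

import Mathlib

open Filter Finset

/-- A division of the interval `[a, b]` into finitely many non-overlapping
subintervals, given by division points `P 0 = a < P 1 < ⋯ < P n = b`. -/
structure Division (a b : ℝ) where
  n : ℕ
  P : ℕ → ℝ
  npos : 0 < n
  mono : ∀ i < n, P i < P (i + 1)
  first : P 0 = a
  last : P n = b

/-- The Riemann sum of the interval function `g` over the division `D`. -/
def Division.sum {a b : ℝ} (D : Division a b) (g : ℝ → ℝ → ℝ) : ℝ :=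
  ∑ i ∈ Finset.range D.n, g (D.P i) (D.P (i + 1))

/-- `D.normLt e` means that the norm (mesh) of the division `D` is `< e`. -/
def Division.normLt {a b : ℝ} (D : Division a b) (e : ℝ) : Prop :=
  ∀ i < D.n, D.P (i + 1) - D.P i < e

/-- A Riemann succession: a sequence of divisions whose norms tend to `0`. -/
def IsRiemannSuccession {a b : ℝ} (D : ℕ → Division a b) : Prop :=
  ∀ e > 0, ∃ N, ∀ n ≥ N, (D n).normLt e

/-- The upper norm-limit of `g` over `[a, b]`: the limit as `e → 0⁺` (equivalently,
the infimum over `e > 0`) of the supremum of Riemann sums over divisions of norm `< e`. -/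
noncomputable def upperNormLimit (g : ℝ → ℝ → ℝ) (a b : ℝ) : EReal :=
  ⨅ e : {e : ℝ // 0 < e},
    sSup {s : EReal | ∃ D : Division a b, D.normLt e.1 ∧ s = ((D.sum g : ℝ) : EReal)}

/-- The lower norm-limit of `g` over `[a, b]`. -/
noncomputable def lowerNormLimit (g : ℝ → ℝ → ℝ) (a b : ℝ) : EReal :=
  ⨆ e : {e : ℝ // 0 < e},
    sInf {s : EReal | ∃ D : Division a b, D.normLt e.1 ∧ s = ((D.sum g : ℝ) : EReal)}

/-- The oscillation of the interval function `g` (defined on subintervals of `[A, B]`)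
at the point `x`: the limit as `δ → 0⁺` (equivalently the infimum over `δ > 0`) of the
supremum of `|g I|` over subintervals `I` of `[A, B]` contained in the interval of
center `x` and length `δ`. -/
noncomputable def osc (g : ℝ → ℝ → ℝ) (A B x : ℝ) : EReal :=
  ⨅ δ : {δ : ℝ // 0 < δ},
    sSup {y : EReal | ∃ a b : ℝ, A ≤ a ∧ a < b ∧ b ≤ B ∧
      x - δ.1 / 2 ≤ a ∧ b ≤ x + δ.1 / 2 ∧ y = ((|g a b| : ℝ) : EReal)}

namespace Division
variable {a b : ℝ} (D : Division a b)


theorem P_lt {i j : ℕ} (hij : i < j) (hj : j ≤ D.n) : D.P i < D.P j := by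
  induction j with
  | zero => omega
  | succ j ih =>
    rcases Nat.lt_succ_iff_lt_or_eq.mp hij with h | h
    · exact (ih h (by omega)).trans (D.mono j (by omega))
    · subst h; exact D.mono i (by omega)

theorem P_le {i j : ℕ} (hij : i ≤ j) (hj : j ≤ D.n) : D.P i ≤ D.P j := by
  rcases eq_or_lt_of_le hij with h | h
  · exact h ▸ le_rfl
  · exact (D.P_lt h hj).le

theorem le_P {i : ℕ} (hi : i ≤ D.n) : a ≤ D.P i := by
  have := D.P_le (Nat.zero_le i) hi; rwa [D.first] at this

theorem P_le' {i : ℕ} (hi : i ≤ D.n) : D.P i ≤ b := by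
  have := D.P_le hi le_rfl; rwa [D.last] at this

theorem hab (D : Division a b) : a < b := by
  have := D.P_lt D.npos le_rfl; rwa [D.first, D.last] at this

theorem P_inj {i j : ℕ} (hi : i ≤ D.n) (hj : j ≤ D.n) (h : D.P i = D.P j) : i = j := by
  by_contra hne
  rcases Nat.lt_or_ge i j with hl | hl
  · exact absurd h (D.P_lt hl hj).ne
  · exact absurd h.symm (D.P_lt (by omega) hi).ne

end Division

/-- Uniform division of norm < e. -/
noncomputable def unifDiv (a b : ℝ) (hab : a < b) (e : ℝ) (he : 0 < e) :
    { D : Division a b // D.normLt e } := by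
  set n : ℕ := ⌊(b - a) / e⌋₊ + 1 with hn
  have hba : 0 < b - a := by linarith
  have hn0 : (0:ℝ) < n := by positivity
  set d : ℝ := (b - a) / n with hd
  have hdpos : 0 < d := by positivity
  have hde : d < e := by
    rw [hd, div_lt_iff₀ hn0]
    have h1 := Nat.lt_floor_add_one ((b - a) / e)
    have : (b - a) / e < (n : ℝ) := by push_cast [hn]; linarith
    calc b - a = (b-a)/e * e := by field_simp
    _ < (n:ℝ) * e := mul_lt_mul_of_pos_right this he
    _ = e * n := mul_comm _ _
  have key : ∀ i : ℕ, (a + (i+1:ℕ) * d) - (a + i * d) = d := by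
    intro i; push_cast; ring
  refine ⟨⟨n, fun i => a + i * d, Nat.succ_pos _, fun i _ => by push_cast; linarith, by simp,
      by rw [hd]; field_simp; ring⟩, fun i _ => by show (a + ((i+1:ℕ):ℝ) * d) - (a + i * d) < e; push_cast; linarith⟩

theorem sum_blocks (f : ℕ → ℝ) (k : ℕ → ℕ) (m : ℕ) (hk : ∀ j, j < m → k j ≤ k (j+1))
    (h0 : k 0 = 0) :
    ∑ i ∈ range (k m), f i = ∑ j ∈ range m, ∑ i ∈ Ico (k j) (k (j+1)), f i := by
  induction m with
  | zero => simp [h0]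
  | succ m ih =>
    rw [Finset.sum_range_succ, ← ih (fun j hj => hk j (by omega))]
    rw [Finset.range_eq_Ico, Finset.range_eq_Ico]
    exact (Finset.sum_Ico_consecutive f (Nat.zero_le _) (hk m (by omega))).symm

/-- Transport a division along equalities of the endpoints. -/
def Division.copy {a b : ℝ} (D : Division a b) (a' b' : ℝ) (ha : a = a') (hb : b = b') :
    Division a' b' :=
  { D with first := ha ▸ D.first, last := hb ▸ D.last }

theorem Division.copy_sum {a b : ℝ} (D : Division a b) (a' b' : ℝ) (ha : a = a') (hb : b = b')
    (g : ℝ → ℝ → ℝ) : (D.copy a' b' ha hb).sum g = D.sum g := rfl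

/-- A block of a division, between indices p < q, as a division of the subinterval. -/
def Division.block {a b : ℝ} (R : Division a b) (p q : ℕ) (hpq : p < q) (hq : q ≤ R.n) :
    Division (R.P p) (R.P q) where
  n := q - p
  P := fun i => R.P (p + i)
  npos := by omega
  mono := fun i hi => R.mono (p + i) (by omega)
  first := by simp
  last := by show R.P (p + (q - p)) = R.P q; congr 1; omega

theorem Division.block_sum {a b : ℝ} (R : Division a b) (g : ℝ → ℝ → ℝ) (p q : ℕ)
    (hpq : p < q) (hq : q ≤ R.n) :
    (R.block p q hpq hq).sum g = ∑ i ∈ Ico p q, g (R.P i) (R.P (i+1)) := by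
  rw [Finset.sum_Ico_eq_sum_range]
  rfl

/-- If `R`’s division points include all of `D`’s, then `R.sum g ≤ D.sum g`
for `g` decreasing on subdivision. -/
theorem sum_le_of_subset {A B : ℝ} (g : ℝ → ℝ → ℝ)
    (hdec : ∀ a b : ℝ, A ≤ a → a < b → b ≤ B → ∀ D : Division a b, D.sum g ≤ g a b)
    (R D : Division A B) (hsub : ∀ j ≤ D.n, ∃ i ≤ R.n, R.P i = D.P j) :
    R.sum g ≤ D.sum g := by
  classical
  set k : ℕ → ℕ := fun j => if h : j ≤ D.n then (hsub j h).choose else R.n with hk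
  have hkspec : ∀ j (h : j ≤ D.n), k j ≤ R.n ∧ R.P (k j) = D.P j := by
    intro j h
    simp only [hk, dif_pos h]
    exact ⟨(hsub j h).choose_spec.1, (hsub j h).choose_spec.2⟩
  have hk0 : k 0 = 0 := by
    have h := hkspec 0 (Nat.zero_le _)
    refine R.P_inj h.1 (Nat.zero_le _) ?_
    rw [h.2, D.first, R.first]
  have hkn : k D.n = R.n := by
    have h := hkspec D.n le_rfl
    refine R.P_inj h.1 le_rfl ?_
    rw [h.2, D.last, R.last]
  have hkmono : ∀ j, j < D.n → k j < k (j+1) := by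
    intro j hj
    have h1 := hkspec j hj.le
    have h2 := hkspec (j+1) hj
    by_contra hle
    have : R.P (k (j+1)) ≤ R.P (k j) := R.P_le (by omega) h1.1
    rw [h1.2, h2.2] at this
    exact absurd (D.mono j hj) (not_lt.mpr this)
  have hsum : R.sum g = ∑ j ∈ range D.n, ∑ i ∈ Ico (k j) (k (j+1)), g (R.P i) (R.P (i+1)) := by
    rw [Division.sum, ← hkn]
    exact sum_blocks _ k D.n (fun j hj => (hkmono j hj).le) hk0
  rw [hsum, Division.sum]
  refine Finset.sum_le_sum fun j hj => ?_
  rw [Finset.mem_range] at hj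
  have h1 := hkspec j hj.le
  have h2 := hkspec (j+1) hj
  have hlt := hkmono j hj
  calc ∑ i ∈ Ico (k j) (k (j+1)), g (R.P i) (R.P (i+1))
      = ((R.block (k j) (k (j+1)) hlt h2.1).copy _ _ h1.2 h2.2).sum g := by
        rw [Division.copy_sum, R.block_sum]
    _ ≤ g (D.P j) (D.P (j+1)) :=
        hdec (D.P j) (D.P (j+1)) (D.le_P hj.le) (D.mono j hj) (D.P_le' hj) _

/-- Inserting a point `c` into a division: the sum decreases by at most `3 ε'`,
provided `g` is small on intervals near `c`. -/
theorem insert_point {A B : ℝ} (g : ℝ → ℝ → ℝ) (E : Division A B) (c : ℝ)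
    (hc : A < c) (hcB : c < B) (e δ ε' : ℝ) (hε' : 0 ≤ ε') (heδ : e ≤ δ / 2)
    (hE : E.normLt e)
    (H : ∀ a b : ℝ, A ≤ a → a < b → b ≤ B → c - δ / 2 ≤ a → b ≤ c + δ / 2 → |g a b| ≤ ε') :
    ∃ E' : Division A B, E'.normLt e ∧
      (∀ i ≤ E.n, ∃ i' ≤ E'.n, E'.P i' = E.P i) ∧
      (∃ i' ≤ E'.n, E'.P i' = c) ∧
      E.sum g ≤ E'.sum g + 3 * ε' := by
  classical
  by_cases hmem : ∃ i ≤ E.n, E.P i = c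
  · exact ⟨E, hE, fun i hi => ⟨i, hi, rfl⟩, hmem, by linarith⟩
  push_neg at hmem
  set i0 : ℕ := Nat.findGreatest (fun i => E.P i < c) E.n with hi0def
  have h0true : E.P 0 < c := by rw [E.first]; exact hc
  have hi0n : i0 ≤ E.n := Nat.findGreatest_le E.n
  have hi0lt : E.P i0 < c := Nat.findGreatest_spec (P := fun i => E.P i < c) (Nat.zero_le E.n) h0true
  have hi0ne : i0 ≠ E.n := by
    intro h
    rw [h, E.last] at hi0lt
    exact absurd hcB (not_lt.mpr hi0lt.le)
  have hi0n' : i0 + 1 ≤ E.n := by omega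
  have hgt : c < E.P (i0 + 1) := by
    have hnot : ¬ E.P (i0 + 1) < c :=
      Nat.findGreatest_is_greatest (P := fun i => E.P i < c) (Nat.lt_succ_self i0) hi0n'
    rcases lt_or_eq_of_le (not_lt.mp hnot) with h | h
    · exact h
    · exact absurd h.symm (hmem (i0+1) hi0n')
  -- the new point function
  set P' : ℕ → ℝ := fun j => if j ≤ i0 then E.P j else if j = i0 + 1 then c else E.P (j - 1)
    with hP'def
  have hPa : ∀ j, j ≤ i0 → P' j = E.P j := fun j hj => by simp [hP'def, hj]
  have hPb : P' (i0 + 1) = c := by simp [hP'def]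
  have hPc : ∀ j, i0 + 2 ≤ j → P' j = E.P (j - 1) := fun j hj => by
    simp only [hP'def]
    rw [if_neg (by omega : ¬ j ≤ i0), if_neg (by omega : ¬ j = i0 + 1)]
  have he : 0 < e := by
    have h1 := hE 0 E.npos
    have h2 := E.mono 0 E.npos
    linarith
  refine ⟨⟨E.n + 1, P', Nat.succ_pos _, ?_, ?_, ?_⟩, ?_, ?_, ?_, ?_⟩
  · -- mono
    intro j hj
    rcases (by omega : j + 1 ≤ i0 ∨ j = i0 ∨ j = i0 + 1 ∨ i0 + 2 ≤ j) with h | h | h | h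
    · rw [hPa j (by omega), hPa (j+1) h]; exact E.mono j (by omega)
    · rw [h, hPa i0 le_rfl, hPb]; exact hi0lt
    · rw [h, hPb, hPc (i0+1+1) (by omega)]
      simpa using hgt
    · rw [hPc j h, hPc (j+1) (by omega)]
      have : j - 1 + 1 = j := by omega
      have hm := E.mono (j-1) (by omega)
      rwa [this] at hm
  · -- first
    rw [hPa 0 (Nat.zero_le _), E.first]
  · -- last
    rw [hPc (E.n + 1) (by omega)]
    simpa using E.last
  · -- normLt
    intro j hj
    have hj' : j < E.n + 1 := hj
    show P' (j+1) - P' j < e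
    rcases (by omega : j + 1 ≤ i0 ∨ j = i0 ∨ j = i0 + 1 ∨ i0 + 2 ≤ j) with h | h | h | h
    · rw [hPa j (by omega), hPa (j+1) h]; exact hE j (by omega)
    · rw [h, hPa i0 le_rfl, hPb]
      have := hE i0 (by omega)
      linarith
    · rw [h, hPb, hPc (i0+1+1) (by omega)]
      have := hE i0 (by omega)
      simp only [show i0 + 1 + 1 - 1 = i0 + 1 by omega]
      linarith
    · rw [hPc j h, hPc (j+1) (by omega)]
      have h2 : j - 1 + 1 = j := by omega
      have hm := hE (j-1) (by omega)
      rw [h2] at hm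
      simpa [show j + 1 - 1 = j by omega] using hm
  · -- old points preserved
    intro i hi
    rcases le_or_gt i i0 with h | h
    · exact ⟨i, by show i ≤ E.n + 1; omega, hPa i h⟩
    · refine ⟨i + 1, by show i + 1 ≤ E.n + 1; omega, ?_⟩
      show P' (i+1) = E.P i
      rw [hPc (i+1) (by omega)]
      simp
  · -- c is a point
    exact ⟨i0 + 1, by show i0 + 1 ≤ E.n + 1; omega, hPb⟩
  · -- sum estimate
    set u := E.P i0 with hu
    set v := E.P (i0 + 1) with hv
    have hgap := hE i0 (by omega)
    have huA : A ≤ u := E.le_P hi0n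
    have hvB : v ≤ B := E.P_le' hi0n'
    have huv : u < v := E.mono i0 (by omega)
    have hul : c - δ / 2 ≤ u := by linarith
    have hvr : v ≤ c + δ / 2 := by linarith
    have b1 : |g u v| ≤ ε' := H u v huA huv hvB hul hvr
    have b2 : |g u c| ≤ ε' := H u c huA hi0lt (by linarith) hul (by linarith)
    have b3 : |g c v| ≤ ε' := H c v (by linarith) hgt hvB (by linarith) hvr
    -- decompose E'.sum
    have htail : ∑ j ∈ Ico (i0+2) (E.n+1), g (P' j) (P' (j+1))
        = ∑ i ∈ Ico (i0+1) E.n, g (E.P i) (E.P (i+1)) := by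
      rw [Finset.sum_Ico_eq_sum_range, Finset.sum_Ico_eq_sum_range,
        (by omega : E.n + 1 - (i0+2) = E.n - (i0+1))]
      refine Finset.sum_congr rfl fun t ht => ?_
      rw [hPc (i0+2+t) (by omega), hPc (i0+2+t+1) (by omega)]
      congr 2 <;> omega
    have hsum' : (∑ j ∈ range (E.n + 1), g (P' j) (P' (j+1)))
        = (∑ j ∈ range i0, g (E.P j) (E.P (j+1))) + g u c + g c v
          + ∑ i ∈ Ico (i0+1) E.n, g (E.P i) (E.P (i+1)) := by
      rw [Finset.range_eq_Ico,
        ← Finset.sum_Ico_consecutive _ (Nat.zero_le (i0+2)) (by omega : i0+2 ≤ E.n+1),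
        ← Finset.range_eq_Ico, Finset.sum_range_succ, Finset.sum_range_succ, htail]
      have e1 : ∑ j ∈ range i0, g (P' j) (P' (j+1)) = ∑ j ∈ range i0, g (E.P j) (E.P (j+1)) :=
        Finset.sum_congr rfl fun j hj => by
          rw [Finset.mem_range] at hj
          rw [hPa j (by omega), hPa (j+1) (by omega)]
      rw [e1, hPa i0 le_rfl, hPb, hPc (i0+2) le_rfl]
      simp only [show i0 + 2 - 1 = i0 + 1 by omega]
      rfl
    have hsumE : E.sum g = (∑ j ∈ range i0, g (E.P j) (E.P (j+1))) + g u v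
        + ∑ i ∈ Ico (i0+1) E.n, g (E.P i) (E.P (i+1)) := by
      rw [Division.sum, Finset.range_eq_Ico,
        ← Finset.sum_Ico_consecutive _ (Nat.zero_le (i0+1)) (by omega : i0+1 ≤ E.n),
        ← Finset.range_eq_Ico, Finset.sum_range_succ]
    show E.sum g ≤ (∑ j ∈ range (E.n + 1), g (P' j) (P' (j+1))) + 3 * ε'
    rw [hsum', hsumE]
    rcases abs_le.mp b1 with ⟨b1l, b1r⟩
    rcases abs_le.mp b2 with ⟨b2l, b2r⟩
    rcases abs_le.mp b3 with ⟨b3l, b3r⟩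
    linarith

/-- Iterating insertion of all points of `D₀` into `E`. -/
theorem refine_all {A B : ℝ} (g : ℝ → ℝ → ℝ) (E D₀ : Division A B) (e δ ε' : ℝ)
    (hε' : 0 ≤ ε') (heδ : e ≤ δ / 2) (hE : E.normLt e)
    (HH : ∀ l ≤ D₀.n, ∀ a b : ℝ, A ≤ a → a < b → b ≤ B →
      D₀.P l - δ / 2 ≤ a → b ≤ D₀.P l + δ / 2 → |g a b| ≤ ε') :
    ∀ j : ℕ, ∃ R : Division A B, R.normLt e ∧
      (∀ l ≤ D₀.n, (l ≤ j ∨ l = D₀.n) → ∃ i ≤ R.n, R.P i = D₀.P l) ∧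
      E.sum g ≤ R.sum g + 3 * j * ε' := by
  intro j
  induction j with
  | zero =>
    refine ⟨E, hE, ?_, by simp⟩
    intro l hl hl'
    rcases (by omega : l = 0 ∨ l = D₀.n) with h | h
    · exact ⟨0, Nat.zero_le _, by rw [h, D₀.first, E.first]⟩
    · exact ⟨E.n, le_rfl, by rw [h, D₀.last, E.last]⟩
  | succ j ih =>
    obtain ⟨R, hRnorm, hRpts, hRsum⟩ := ih
    by_cases hj : j + 1 < D₀.n
    · -- insert D₀.P (j+1)
      set c := D₀.P (j + 1) with hc
      have hcA : A < c := by
        have := D₀.P_lt (Nat.succ_pos j) (by omega)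
        rwa [D₀.first] at this
      have hcB : c < B := by
        have := D₀.P_lt hj le_rfl
        rwa [D₀.last] at this
      obtain ⟨R', h1, h2, h3, h4⟩ := insert_point g R c hcA hcB e δ ε' hε' heδ hRnorm
        (HH (j+1) (by omega))
      refine ⟨R', h1, ?_, ?_⟩
      · intro l hl hl'
        rcases (by omega : (l ≤ D₀.n ∧ (l ≤ j ∨ l = D₀.n)) ∨ l = j + 1) with h | h
        · obtain ⟨i, hi, hieq⟩ := hRpts l h.1 h.2
          obtain ⟨i', hi', hieq'⟩ := h2 i hi
          exact ⟨i', hi', by rw [hieq', hieq]⟩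
        · subst h; exact h3
      · calc E.sum g ≤ R.sum g + 3 * j * ε' := hRsum
          _ ≤ (R'.sum g + 3 * ε') + 3 * j * ε' := by linarith
          _ = R'.sum g + 3 * (j + 1 : ℕ) * ε' := by push_cast; ring
    · refine ⟨R, hRnorm, ?_, ?_⟩
      · intro l hl hl'
        exact hRpts l hl (by omega)
      · have : (3 : ℝ) * j * ε' ≤ 3 * (j+1 : ℕ) * ε' := by
          have : (0:ℝ) ≤ 3 * ε' := by linarith
          push_cast; nlinarith
        linarith

/-- Extracting a uniform smallness radius from vanishing oscillation. -/
theorem osc_small {A B x : ℝ} (g : ℝ → ℝ → ℝ)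
    (h : (⨅ δ : {δ : ℝ // 0 < δ},
      sSup {y : EReal | ∃ a b : ℝ, A ≤ a ∧ a < b ∧ b ≤ B ∧
        x - δ.1 / 2 ≤ a ∧ b ≤ x + δ.1 / 2 ∧ y = ((|g a b| : ℝ) : EReal)}) = 0)
    (ε' : ℝ) (hε' : 0 < ε') :
    ∃ δ > 0, ∀ a b : ℝ, A ≤ a → a < b → b ≤ B →
      x - δ / 2 ≤ a → b ≤ x + δ / 2 → |g a b| ≤ ε' := by
  have hlt : (⨅ δ : {δ : ℝ // 0 < δ},
      sSup {y : EReal | ∃ a b : ℝ, A ≤ a ∧ a < b ∧ b ≤ B ∧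
        x - δ.1 / 2 ≤ a ∧ b ≤ x + δ.1 / 2 ∧ y = ((|g a b| : ℝ) : EReal)}) < (ε' : EReal) := by
    rw [h]
    exact_mod_cast EReal.coe_lt_coe_iff.mpr hε'
  rw [iInf_lt_iff] at hlt
  obtain ⟨⟨δ, hδ⟩, hsup⟩ := hlt
  refine ⟨δ, hδ, fun a b ha hab hb hl hr => ?_⟩
  have hmem : ((|g a b| : ℝ) : EReal) ∈ {y : EReal | ∃ a b : ℝ, A ≤ a ∧ a < b ∧ b ≤ B ∧
      x - δ / 2 ≤ a ∧ b ≤ x + δ / 2 ∧ y = ((|g a b| : ℝ) : EReal)} :=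
    ⟨a, b, ha, hab, hb, hl, hr, rfl⟩
  have := (le_sSup hmem).trans_lt hsup
  exact_mod_cast this.le

/-- Key estimate: every fine-enough division has sum at most `D₀.sum g + ε`. -/
theorem key_estimate {A B : ℝ} (g : ℝ → ℝ → ℝ) (hAB : A < B)
    (hdec : ∀ a b : ℝ, A ≤ a → a < b → b ≤ B → ∀ D : Division a b, D.sum g ≤ g a b)
    (hcont : ∀ x ∈ Set.Icc A B, (⨅ δ : {δ : ℝ // 0 < δ},
      sSup {y : EReal | ∃ a b : ℝ, A ≤ a ∧ a < b ∧ b ≤ B ∧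
        x - δ.1 / 2 ≤ a ∧ b ≤ x + δ.1 / 2 ∧ y = ((|g a b| : ℝ) : EReal)}) = 0)
    (D₀ : Division A B) (ε : ℝ) (hε : 0 < ε) :
    ∃ e > 0, ∀ E : Division A B, E.normLt e → E.sum g ≤ D₀.sum g + ε := by
  classical
  set ε' : ℝ := ε / (3 * (D₀.n + 1)) with hε'def
  have hε' : 0 < ε' := by positivity
  have hchoice : ∀ l, l ≤ D₀.n → ∃ δ > 0, ∀ a b : ℝ, A ≤ a → a < b → b ≤ B →
      D₀.P l - δ / 2 ≤ a → b ≤ D₀.P l + δ / 2 → |g a b| ≤ ε' := by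
    intro l hl
    exact osc_small g (hcont (D₀.P l) ⟨D₀.le_P hl, D₀.P_le' hl⟩) ε' hε'
  set δf : ℕ → ℝ := fun l => if h : l ≤ D₀.n then (hchoice l h).choose else 1 with hδf
  have hδfpos : ∀ l ∈ Finset.range (D₀.n + 1), 0 < δf l := by
    intro l hl
    rw [Finset.mem_range] at hl
    simp only [hδf, dif_pos (by omega : l ≤ D₀.n)]
    exact (hchoice l (by omega)).choose_spec.1
  have hne : (Finset.range (D₀.n + 1)).Nonempty := ⟨0, by simp⟩
  set δ : ℝ := (Finset.range (D₀.n + 1)).inf' hne δf with hδdef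
  have hδpos : 0 < δ := (Finset.lt_inf'_iff hne).mpr hδfpos
  refine ⟨δ / 2, by positivity, fun E hE => ?_⟩
  have HH : ∀ l ≤ D₀.n, ∀ a b : ℝ, A ≤ a → a < b → b ≤ B →
      D₀.P l - δ / 2 ≤ a → b ≤ D₀.P l + δ / 2 → |g a b| ≤ ε' := by
    intro l hl a b ha hab hb h1 h2
    have hle : δ ≤ δf l := Finset.inf'_le δf (by simp; omega)
    have := (hchoice l hl).choose_spec.2 a b ha hab hb
    rw [hδf] at hle
    simp only [dif_pos hl] at hle
    exact this (by linarith) (by linarith)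
  obtain ⟨R, hRnorm, hRpts, hRsum⟩ :=
    refine_all g E D₀ (δ/2) δ ε' hε'.le le_rfl hE HH D₀.n
  have hsub : ∀ j ≤ D₀.n, ∃ i ≤ R.n, R.P i = D₀.P j := fun j hj => hRpts j hj (Or.inl hj)
  have hRD : R.sum g ≤ D₀.sum g := sum_le_of_subset g hdec R D₀ hsub
  have hfin : 3 * (D₀.n : ℝ) * ε' ≤ ε := by
    have h1 : (0:ℝ) < 3 * ((D₀.n:ℝ) + 1) := by positivity
    rw [hε'def, ← mul_div_assoc, div_le_iff₀ h1]
    nlinarith [hε.le]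
  calc E.sum g ≤ R.sum g + 3 * (D₀.n : ℝ) * ε' := hRsum
    _ ≤ D₀.sum g + ε := by linarith

/-- (3.2 Corollary): If the interval function `g` decreases on subdivision (every Riemann
sum over a division of a subinterval `J` is at most `g(J)`) and is continuous (zero
oscillation at every point of `[A, B]`), then either the upper norm-limit of `g` over
`[A, B]` is `−∞`, or the norm-limit of `g` over `[A, B]` exists: the upper and lower
norm-limits are equal and finite. -/
theorem normLimit_exists_of_decreasing_continuous (g : ℝ → ℝ → ℝ) (A B : ℝ) (hAB : A < B)
    (hdec : ∀ a b : ℝ, A ≤ a → a < b → b ≤ B → ∀ D : Division a b, D.sum g ≤ g a b)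
    (hcont : ∀ x ∈ Set.Icc A B, osc g A B x = 0) :
    upperNormLimit g A B = ⊥ ∨
      ∃ L : ℝ, upperNormLimit g A B = (L : EReal) ∧ lowerNormLimit g A B = (L : EReal) := by
  classical
  have hcont' : ∀ x ∈ Set.Icc A B, (⨅ δ : {δ : ℝ // 0 < δ},
      sSup {y : EReal | ∃ a b : ℝ, A ≤ a ∧ a < b ∧ b ≤ B ∧
        x - δ.1 / 2 ≤ a ∧ b ≤ x + δ.1 / 2 ∧ y = ((|g a b| : ℝ) : EReal)}) = 0 := hcont
  set S : {e : ℝ // 0 < e} → Set EReal := fun e =>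
    {s : EReal | ∃ D : Division A B, D.normLt e.1 ∧ s = ((D.sum g : ℝ) : EReal)} with hS
  have hupper : upperNormLimit g A B = ⨅ e, sSup (S e) := rfl
  have hlower : lowerNormLimit g A B = ⨆ e, sInf (S e) := rfl
  set I : EReal := ⨅ D : Division A B, ((D.sum g : ℝ) : EReal) with hI
  -- upper ≤ I
  have hup_le : upperNormLimit g A B ≤ I := by
    rw [hupper]
    refine le_iInf fun D₀ => ?_
    have hstep : ∀ ε : ℝ, 0 < ε → upperNormLimit g A B ≤ ((D₀.sum g + ε : ℝ) : EReal) := by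
      intro ε hε
      obtain ⟨e, he, hkey⟩ := key_estimate g hAB hdec hcont' D₀ ε hε
      refine le_trans (iInf_le _ ⟨e, he⟩) (sSup_le ?_)
      rintro s ⟨E, hEnorm, rfl⟩
      exact_mod_cast hkey E hEnorm
    rw [← hupper]
    by_contra hlt
    push_neg at hlt
    obtain ⟨r, hr1, hr2⟩ := EReal.lt_iff_exists_real_btwn.mp hlt
    have hcr : D₀.sum g < r := by exact_mod_cast hr1
    have h := hstep (r - D₀.sum g) (by linarith)
    rw [show D₀.sum g + (r - D₀.sum g) = r by ring] at h
    exact absurd hr2 (not_lt.mpr h)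
  -- I ≤ lower
  have hI_le : I ≤ lowerNormLimit g A B := by
    rw [hlower]
    refine le_trans ?_ (le_iSup _ (⟨1, one_pos⟩ : {e : ℝ // 0 < e}))
    refine le_sInf ?_
    rintro s ⟨E, _, rfl⟩
    exact iInf_le _ E
  -- lower ≤ upper
  have hlu : lowerNormLimit g A B ≤ upperNormLimit g A B := by
    rw [hlower, hupper]
    refine iSup_le fun e1 => le_iInf fun e2 => ?_
    obtain ⟨D, hD⟩ := unifDiv A B hAB (min e1.1 e2.1) (lt_min e1.2 e2.2)
    have hD1 : D.normLt e1.1 := fun i hi => lt_of_lt_of_le (hD i hi) (min_le_left _ _)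
    have hD2 : D.normLt e2.1 := fun i hi => lt_of_lt_of_le (hD i hi) (min_le_right _ _)
    exact le_trans (sInf_le ⟨D, hD1, rfl⟩) (le_sSup ⟨D, hD2, rfl⟩)
  have hupI : upperNormLimit g A B = I := le_antisymm hup_le (hI_le.trans hlu)
  have hloI : lowerNormLimit g A B = I := le_antisymm (hlu.trans_eq hupI) hI_le
  by_cases hbot : I = ⊥
  · exact Or.inl (hupI.trans hbot)
  · refine Or.inr ⟨I.toReal, ?_, ?_⟩
    · rw [hupI, EReal.coe_toReal ?_ hbot]
      obtain ⟨D, _⟩ := unifDiv A B hAB 1 one_pos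
      exact ne_top_of_le_ne_top (EReal.coe_ne_top _) (iInf_le _ D)
    · rw [hloI, EReal.coe_toReal ?_ hbot]
      obtain ⟨D, _⟩ := unifDiv A B hAB 1 one_pos
      exact ne_top_of_le_ne_top (EReal.coe_ne_top _) (iInf_le _ D)
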